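/- If there exists an uncountable Δ-set X ⊆ 2^ω, then there exists a countable Boolean subalgebra A' of the power set of ω₁ (closed under finite unions, finite intersections and complements in ω₁) which separates points of ω₁ (for all distinct α, β ∈ ω₁ there is A ∈ A' with α ∈ A and β ∉ A), and such that for every vanishing sequence (F_n : n ∈ ℕ) of subsets of ω₁ there exists a vanishing sequence (G_n : n ∈ ℕ) of subsets of ω₁ with F_n ⊆ G_n for all n, where each G_n is a countable union of members of A'. -/

import Mathlib

/-- The Cantor space `2^ω`. -/
abbrev Cantor : Type := ℕ → Bool

/-- The first uncountable ordinal `ω₁`, as a type. -/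
abbrev Omega1 : Type := Ordinal.ToType (Ordinal.omega.{0} 1)

/-- A sequence of sets is *vanishing* if it is decreasing and has empty intersection. -/
def Vanishing {α : Type*} (F : ℕ → Set α) : Prop :=
  (∀ n, F (n + 1) ⊆ F n) ∧ (⋂ n, F n) = ∅

/-- An uncountable subset `X` of a topological space is a *Δ-set* if every vanishing
sequence of subsets of `X` admits a vanishing expansion by relatively open sets. -/
def IsDeltaSet {α : Type*} [TopologicalSpace α] (X : Set α) : Prop :=
  ¬ X.Countable ∧
    ∀ F : ℕ → Set X, Vanishing F →
      ∃ U : ℕ → Set X, (∀ n, IsOpen (U n)) ∧ Vanishing U ∧ ∀ n, F n ⊆ U n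

/-- Levels of the Boolean algebra of sets generated by a family `C`. -/
def algLev {α : Type*} (C : Set (Set α)) : ℕ → Set (Set α)
  | 0 => C
  | n + 1 => algLev C n ∪ Set.image2 (· ∪ ·) (algLev C n) (algLev C n) ∪
      Set.image2 (· ∩ ·) (algLev C n) (algLev C n) ∪ compl '' (algLev C n)

theorem algLev_subset_succ {α : Type*} (C : Set (Set α)) (n : ℕ) :
    algLev C n ⊆ algLev C (n + 1) := fun S hS => by
  simp only [algLev]; exact Or.inl (Or.inl (Or.inl hS))

theorem algLev_mono {α : Type*} (C : Set (Set α)) {m n : ℕ} (h : m ≤ n) :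
    algLev C m ⊆ algLev C n := by
  induction n with
  | zero => simp_all
  | succ k ih =>
    rcases Nat.lt_or_ge m (k + 1) with h' | h'
    · exact (ih (Nat.lt_succ_iff.mp h')).trans (algLev_subset_succ C k)
    · have : m = k + 1 := le_antisymm h h'
      subst this; exact subset_rfl

theorem algLev_countable {α : Type*} {C : Set (Set α)} (hC : C.Countable) (n : ℕ) :
    (algLev C n).Countable := by
  induction n with
  | zero => exact hC
  | succ k ih =>
    exact (((ih.union (ih.image2 ih _)).union (ih.image2 ih _)).union (ih.image _))

/-- If there is an uncountable Δ-set `X ⊆ 2^ω`, then there is a countable subalgebra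
`A` of `𝒫(ω₁)` (closed under finite unions, finite intersections and complements)
which separates points of `ω₁`, and such that every vanishing sequence of subsets of
`ω₁` admits a vanishing expansion by countable unions of members of `A`. -/
theorem exists_countable_algebra_of_delta_set (X : Set Cantor) (hX : IsDeltaSet X) :
    ∃ A : Set (Set Omega1), A.Countable ∧
      (∀ S ∈ A, ∀ T ∈ A, S ∪ T ∈ A) ∧
      (∀ S ∈ A, ∀ T ∈ A, S ∩ T ∈ A) ∧
      (∀ S ∈ A, Sᶜ ∈ A) ∧
      (∀ α β : Omega1, α ≠ β → ∃ S ∈ A, α ∈ S ∧ β ∉ S) ∧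
      ∀ F : ℕ → Set Omega1, Vanishing F →
        ∃ G : ℕ → Set Omega1, Vanishing G ∧ (∀ n, F n ⊆ G n) ∧
          ∀ n, ∃ g : ℕ → Set Omega1, (∀ k, g k ∈ A) ∧ G n = ⋃ k, g k := by
  obtain ⟨hXu, hDelta⟩ := hX
  -- an injection `i : Omega1 ↪ X`
  have h1 : (Cardinal.aleph 1) ≤ Cardinal.mk X := by
    by_contra h
    exact hXu ((Cardinal.countable_iff_lt_aleph_one X).mpr (lt_of_not_ge h))
  have h2 : Cardinal.mk Omega1 ≤ Cardinal.mk X := by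
    rw [Cardinal.mk_toType, Ordinal.card_omega]
    exact h1
  obtain ⟨i⟩ := Cardinal.le_def _ _ |>.mp h2
  set j : Omega1 → Cantor := fun a => (i a : Cantor) with hj
  have hjinj : Function.Injective j := fun a b hab => i.injective (Subtype.ext hab)
  -- countable basis of Cantor space
  obtain ⟨B, hBc, -, hB⟩ := TopologicalSpace.exists_countable_basis Cantor
  set C : Set (Set Omega1) := insert ∅ ((fun b => j ⁻¹' b) '' B) with hCdef
  have hCc : C.Countable := (hBc.image _).insert _
  refine ⟨⋃ n, algLev C n, Set.countable_iUnion (algLev_countable hCc), ?_, ?_, ?_, ?_, ?_⟩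
  · rintro S hS T hT
    obtain ⟨m, hm⟩ := Set.mem_iUnion.mp hS
    obtain ⟨n, hn⟩ := Set.mem_iUnion.mp hT
    refine Set.mem_iUnion.mpr ⟨max m n + 1, ?_⟩
    exact Or.inl (Or.inl (Or.inr (Set.mem_image2_of_mem
      (algLev_mono C (le_max_left m n) hm) (algLev_mono C (le_max_right m n) hn))))
  · rintro S hS T hT
    obtain ⟨m, hm⟩ := Set.mem_iUnion.mp hS
    obtain ⟨n, hn⟩ := Set.mem_iUnion.mp hT
    refine Set.mem_iUnion.mpr ⟨max m n + 1, ?_⟩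
    exact Or.inl (Or.inr (Set.mem_image2_of_mem
      (algLev_mono C (le_max_left m n) hm) (algLev_mono C (le_max_right m n) hn)))
  · rintro S hS
    obtain ⟨m, hm⟩ := Set.mem_iUnion.mp hS
    exact Set.mem_iUnion.mpr ⟨m + 1, Or.inr ⟨S, hm, rfl⟩⟩
  · -- separation
    intro α β hne
    have hjne : j α ≠ j β := fun h => hne (hjinj h)
    obtain ⟨n, hn⟩ := Function.ne_iff.mp hjne
    have hVopen : IsOpen ((fun z : Cantor => z n) ⁻¹' {j α n}) :=
      (isOpen_discrete ({j α n} : Set Bool)).preimage (continuous_apply n)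
    obtain ⟨b, hbB, hmem, hsub⟩ := hB.exists_subset_of_mem_open
      (Set.mem_preimage.mpr (Set.mem_singleton _)) hVopen
    refine ⟨j ⁻¹' b, Set.mem_iUnion.mpr ⟨0, Set.mem_insert_iff.mpr
      (Or.inr ⟨b, hbB, rfl⟩)⟩, hmem, fun hβ => hn ?_⟩
    have := hsub hβ
    simp only [Set.mem_preimage, Set.mem_singleton_iff] at this
    exact this.symm
  · -- vanishing sequences
    intro F hF
    set F' : ℕ → Set X := fun n => i '' F n with hF'
    have hF'van : Vanishing F' := by
      constructor
      · intro n
        exact Set.image_mono (hF.1 n)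
      · ext x
        simp only [Set.mem_iInter, Set.mem_empty_iff_false, iff_false]
        intro hx
        obtain ⟨a, -, hax⟩ := hx 0
        have ha : a ∈ ⋂ n, F n := by
          refine Set.mem_iInter.mpr fun n => ?_
          obtain ⟨a', ha', ha'x⟩ := hx n
          rwa [i.injective (ha'x.trans hax.symm)] at ha'
        rw [hF.2] at ha
        exact ha
    obtain ⟨U, hUopen, hUvan, hFU⟩ := hDelta F' hF'van
    refine ⟨fun n => i ⁻¹' U n, ⟨fun n => Set.preimage_mono (hUvan.1 n), ?_⟩,
      fun n a ha => hFU n ⟨a, ha, rfl⟩, ?_⟩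
    · ext a
      simp only [Set.mem_iInter, Set.mem_preimage, Set.mem_empty_iff_false, iff_false]
      intro h
      have : (i a : X) ∈ ⋂ n, U n := Set.mem_iInter.mpr h
      rw [hUvan.2] at this
      exact this
    · intro n
      obtain ⟨V, hVopen, hVeq⟩ := isOpen_induced_iff.mp (hUopen n)
      obtain ⟨S, hSB, hSeq⟩ := hB.open_eq_sUnion hVopen
      set T : Set (Set Omega1) := insert ∅ ((fun b => j ⁻¹' b) '' S) with hT
      have hTc : T.Countable := ((hBc.mono hSB).image _).insert _
      obtain ⟨g, hg⟩ := hTc.exists_eq_range ⟨∅, Set.mem_insert _ _⟩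
      refine ⟨g, fun k => ?_, ?_⟩
      · have hgk : g k ∈ T := hg ▸ Set.mem_range_self k
        refine Set.mem_iUnion.mpr ⟨0, ?_⟩
        rcases hgk with h | ⟨b, hbS, hbe⟩
        · exact Set.mem_insert_iff.mpr (Or.inl h)
        · exact Set.mem_insert_iff.mpr (Or.inr ⟨b, hSB hbS, hbe⟩)
      · have hGn : (i ⁻¹' U n : Set Omega1) = j ⁻¹' V := by rw [← hVeq]; rfl
        show (i ⁻¹' U n : Set Omega1) = ⋃ k, g k
        rw [hGn]
        calc j ⁻¹' V = j ⁻¹' ⋃₀ S := by rw [hSeq]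
          _ = ⋃ b ∈ S, j ⁻¹' b := Set.preimage_sUnion
          _ = ⋃₀ ((fun b => j ⁻¹' b) '' S) := (Set.sUnion_image _ _).symm
          _ = ⋃₀ T := by rw [hT, Set.sUnion_insert, Set.empty_union]
          _ = ⋃ k, g k := by rw [hg, Set.sUnion_range]
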